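/- Let k be a field of characteristic zero, K = k(t), and φ(x) = x^d + t ∈ K[x] with d ≥ 2. Then for every n ≥ 1, the polynomial φ^n(0) ∈ k[t] (the n-th iterate of φ evaluated at 0, viewed as a polynomial in t) is squarefree. -/

import Mathlib

open Polynomial

private lemma map_iter_orbit {R S : Type*} [CommRing R] [CommRing S] (φ : R →+* S)
    (d : ℕ) : ∀ n : ℕ,
    Polynomial.map φ ((fun q : Polynomial R => q ^ d + X)^[n] 0)
      = (fun q : Polynomial S => q ^ d + X)^[n] 0 := by
  intro n
  induction n with
  | zero => simp
  | succ m ih =>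
      rw [Function.iterate_succ_apply', Function.iterate_succ_apply',
        Polynomial.map_add, Polynomial.map_pow, ih, Polynomial.map_X]

private lemma orbit_monic_deg (d : ℕ) (hd : 2 ≤ d) : ∀ m : ℕ,
    ((fun q : Polynomial ℤ => q ^ d + X)^[m + 1] 0).Monic ∧
      ((fun q : Polynomial ℤ => q ^ d + X)^[m + 1] 0).natDegree = d ^ m := by
  intro m
  induction m with
  | zero =>
      rw [Function.iterate_one]
      have h : (0 : Polynomial ℤ) ^ d + X = X := by
        rw [zero_pow (by omega), zero_add]
      rw [h]
      exact ⟨monic_X, by simp⟩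
  | succ m ih =>
      obtain ⟨hmon, hdeg⟩ := ih
      set f := (fun q : Polynomial ℤ => q ^ d + X)^[m + 1] 0 with hf
      have hstep : (fun q : Polynomial ℤ => q ^ d + X)^[m + 2] 0 = f ^ d + X := by
        rw [Function.iterate_succ_apply']
      have hpowmon : (f ^ d).Monic := hmon.pow d
      have hdegpow : (f ^ d).natDegree = d ^ (m + 1) := by
        rw [natDegree_pow, hdeg, pow_succ, mul_comm]
      have h1lt : 1 < d ^ (m + 1) := by
        calc 1 < d := by omega
        _ ≤ d ^ (m + 1) := Nat.le_self_pow (by omega) d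
      have hlt : (X : Polynomial ℤ).degree < (f ^ d).degree := by
        rw [degree_X, Polynomial.degree_eq_natDegree hpowmon.ne_zero, hdegpow]
        exact_mod_cast h1lt
      constructor
      · rw [hstep]; exact hpowmon.add_of_left hlt
      · rw [hstep, natDegree_add_eq_left_of_degree_lt hlt, hdegpow]

/-- Let `k` have characteristic zero, `K = k(t)`, and `φ(x) = x^d + t` with
`d ≥ 2`.  Then for every `n ≥ 1` the `n`-th orbit value `φ^n(0) ∈ k[t]`
(defined by `φ^1(0) = t`, `φ^n(0) = (φ^{n−1}(0))^d + t`) is squarefree. -/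
theorem orbit_squarefree {k : Type*} [Field k] [CharZero k] (d : ℕ) (hd : 2 ≤ d)
    (n : ℕ) (hn : 1 ≤ n) :
    Squarefree ((fun q : Polynomial k => q ^ d + X)^[n] 0) := by
  obtain ⟨m, rfl⟩ : ∃ m, n = m + 1 := ⟨n - 1, by omega⟩
  -- the integer model
  set F : Polynomial ℤ := (fun q : Polynomial ℤ => q ^ d + X)^[m + 1] 0 with hF
  obtain ⟨hFmon, hFdeg⟩ := orbit_monic_deg d hd m
  rw [← hF] at hFmon hFdeg
  -- reduction mod a prime p ∣ d
  set p := d.minFac with hp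
  have hpprime : p.Prime := Nat.minFac_prime (by omega)
  haveI : Fact p.Prime := ⟨hpprime⟩
  have hpd : p ∣ d := Nat.minFac_dvd d
  have hdp0 : ((d : ZMod p)) = 0 := (ZMod.natCast_eq_zero_iff d p).mpr hpd
  -- the derivative of the reduction is 1, so the reduction is separable
  have hsepmod : (F.map (Int.castRingHom (ZMod p))).Separable := by
    have hmap : F.map (Int.castRingHom (ZMod p))
        = ((fun q : Polynomial (ZMod p) => q ^ d + X)^[m] 0) ^ d + X := by
      rw [hF, map_iter_orbit, Function.iterate_succ_apply']
    have hder : derivative (F.map (Int.castRingHom (ZMod p))) = 1 := by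
      rw [hmap, derivative_add, derivative_pow, derivative_X, hdp0, map_zero,
        zero_mul, zero_mul, zero_add]
    rw [Polynomial.separable_def, hder]
    exact isCoprime_one_right
  have hsqmod : Squarefree (F.map (Int.castRingHom (ZMod p))) := hsepmod.squarefree
  -- squarefree over ℤ
  have hsqZ : Squarefree F := by
    intro g hg
    by_contra hgu
    obtain ⟨h, hh⟩ := hg
    have hF0 : F ≠ 0 := hFmon.ne_zero
    -- leading coefficient of g is a unit
    have hlcu : IsUnit g.leadingCoeff := by
      have h1 : g.leadingCoeff * (g.leadingCoeff * h.leadingCoeff) = 1 := by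
        have h2 := congrArg leadingCoeff hh
        rw [leadingCoeff_mul, leadingCoeff_mul, hFmon.leadingCoeff] at h2
        rw [← mul_assoc]; exact h2.symm
      exact IsUnit.of_mul_eq_one _ h1
    have hg0 : g ≠ 0 := by
      rintro rfl; rw [mul_zero, zero_mul] at hh; exact hF0 hh
    have hgdeg : 1 ≤ g.natDegree := by
      rcases Nat.eq_zero_or_pos g.natDegree with h0 | h1
      · exfalso
        have hc : IsUnit (g.coeff 0) := by
          rw [← h0, ← Polynomial.leadingCoeff]; exact hlcu
        exact hgu ((Polynomial.eq_C_of_natDegree_eq_zero h0) ▸ isUnit_C.mpr hc)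
      · exact h1
    -- reduce mod p
    have hlcne : (Int.castRingHom (ZMod p)) g.leadingCoeff ≠ 0 :=
      (hlcu.map (Int.castRingHom (ZMod p))).ne_zero
    have hgbar : (g.map (Int.castRingHom (ZMod p))).natDegree = g.natDegree :=
      natDegree_map_of_leadingCoeff_ne_zero _ hlcne
    have hdvd : (g.map (Int.castRingHom (ZMod p))) * (g.map (Int.castRingHom (ZMod p)))
        ∣ F.map (Int.castRingHom (ZMod p)) :=
      ⟨h.map _, by rw [hh, Polynomial.map_mul, Polynomial.map_mul]⟩
    have hu := hsqmod _ hdvd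
    have := Polynomial.natDegree_eq_zero_of_isUnit hu
    omega
  -- squarefree over ℚ
  have hsqQ : Squarefree (F.map (algebraMap ℤ ℚ)) := by
    intro x hx
    by_contra hxu
    have hFQ0 : F.map (algebraMap ℤ ℚ) ≠ 0 := (hFmon.map (algebraMap ℤ ℚ)).ne_zero
    have hx0 : x ≠ 0 := by rintro rfl; rw [mul_zero] at hx; exact hFQ0 (zero_dvd_iff.mp hx)
    obtain ⟨i, hi_irr, hi_dvd⟩ := WfDvdMonoid.exists_irreducible_factor hxu hx0
    have hi0 : i ≠ 0 := hi_irr.ne_zero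
    set π : Polynomial ℚ := i * C i.leadingCoeff⁻¹ with hπ
    have hπmon : π.Monic := monic_mul_leadingCoeff_inv hi0
    have hπassoc : Associated i π := by
      refine associated_mul_unit_right i _ ?_
      exact isUnit_C.mpr ((inv_ne_zero (leadingCoeff_ne_zero.mpr hi0)).isUnit)
    have hπdvdx : π ∣ x := hπassoc.dvd_iff_dvd_left.mp hi_dvd
    have hπ2dvdF : π * π ∣ F.map (algebraMap ℤ ℚ) := (mul_dvd_mul hπdvdx hπdvdx).trans hx
    have hπdvdF : π ∣ F.map (algebraMap ℤ ℚ) := (dvd_mul_right π π).trans hπ2dvdF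
    -- lift π to ℤ
    obtain ⟨π₀, hπ₀⟩ := IsIntegrallyClosed.eq_map_mul_C_of_dvd ℚ hFmon hπdvdF
    rw [hπmon.leadingCoeff, map_one, mul_one] at hπ₀
    have hπ₀mon : π₀.Monic :=
      Polynomial.monic_of_injective (algebraMap ℤ ℚ).injective_int (hπ₀ ▸ hπmon)
    have hπ₀2 : π₀ * π₀ ∣ F := by
      refine Polynomial.Monic.dvd_of_fraction_map_dvd_fraction_map (K := ℚ) hFmon (hπ₀mon.mul hπ₀mon) ?_
      rw [Polynomial.map_mul, hπ₀]
      exact hπ2dvdF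
    have hu : IsUnit π₀ := hsqZ _ hπ₀2
    have : IsUnit π := by
      rw [← hπ₀]
      exact (hu.map (Polynomial.mapRingHom (algebraMap ℤ ℚ)))
    exact hi_irr.not_isUnit (hπassoc.symm.isUnit this)
  -- transfer to k via separability
  have hsepQ : (F.map (algebraMap ℤ ℚ)).Separable :=
    PerfectField.separable_iff_squarefree.mpr hsqQ
  have hsepk : ((F.map (algebraMap ℤ ℚ)).map (algebraMap ℚ k)).Separable := hsepQ.map
  rw [Polynomial.map_map, hF, map_iter_orbit] at hsepk
  exact hsepk.squarefree
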